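/- arXiv:1901.03247 — 2 statements merged into one kernel-verified Lean document; each statement's English description precedes it below -/
import Mathlib

section
/- The number of reduced words of the longest permutation of S_n is maximal among all permutations: for any w in S_n, the number of reduced words of w is at most the number of reduced words of the longest element w_0 = n, n-1, ..., 2, 1. -/
/-- The adjacent transposition `s i`, swapping `i` and `i+1` (0-indexed). -/
def s (i : ℕ) : Equiv.Perm ℕ := Equiv.swap i (i + 1)

/-- The product `s i₁ * s i₂ * ⋯ * s iₗ` of a word. -/
def wordProd (l : List ℕ) : Equiv.Perm ℕ := (l.map s).prod

/-- The Coxeter length of `w`: the minimal length of a word in the `s i` representing `w`. -/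
noncomputable def len (w : Equiv.Perm ℕ) : ℕ :=
  sInf {N | ∃ l : List ℕ, l.length = N ∧ wordProd l = w}

/-- `l` is a reduced word for `w`. -/
def IsReducedWord (w : Equiv.Perm ℕ) (l : List ℕ) : Prop :=
  wordProd l = w ∧ l.length = len w

/-- The number of reduced words of `w`. -/
noncomputable def numRed (w : Equiv.Perm ℕ) : ℕ :=
  Set.ncard {l : List ℕ | IsReducedWord w l}

/-- The longest element of `S n`: `i ↦ n - 1 - i` for `i < n` (0-indexed). -/
noncomputable def w0 (n : ℕ) : Equiv.Perm ℕ :=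
  Function.Involutive.toPerm (fun i => if i < n then n - 1 - i else i)
    (by intro i; dsimp only; split_ifs <;> omega)


lemma s_apply (i a : ℕ) : s i a = if a = i then i + 1 else if a = i + 1 then i else a := by
  simp [s, Equiv.swap_apply_def]

lemma s_mul_s (i : ℕ) : s i * s i = 1 := by
  simp [s, Equiv.swap_mul_self]

lemma wordProd_nil : wordProd [] = 1 := rfl

lemma wordProd_cons (i : ℕ) (l : List ℕ) : wordProd (i :: l) = s i * wordProd l := by
  simp [wordProd]

lemma wordProd_append (l₁ l₂ : List ℕ) :
    wordProd (l₁ ++ l₂) = wordProd l₁ * wordProd l₂ := by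
  simp [wordProd]

lemma wordProd_concat (l : List ℕ) (i : ℕ) :
    wordProd (l ++ [i]) = wordProd l * s i := by
  simp [wordProd_append, wordProd]

/-- `FixGE N v` : `v` fixes everything `≥ N`. -/
def FixGE (N : ℕ) (v : Equiv.Perm ℕ) : Prop := ∀ k, N ≤ k → v k = k

lemma FixGE.mono {N M : ℕ} {v : Equiv.Perm ℕ} (h : FixGE N v) (hNM : N ≤ M) : FixGE M v :=
  fun k hk => h k (le_trans hNM hk)

lemma FixGE.lt {N : ℕ} {v : Equiv.Perm ℕ} (h : FixGE N v) {a : ℕ} (ha : a < N) : v a < N := by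
  by_contra hc
  push_neg at hc
  have h1 : v (v a) = v a := h (v a) hc
  have : v a = a := v.injective h1
  omega

lemma FixGE.inv {N : ℕ} {v : Equiv.Perm ℕ} (h : FixGE N v) : FixGE N v⁻¹ := by
  intro k hk
  have := h k hk
  calc v⁻¹ k = v⁻¹ (v k) := by rw [this]
  _ = k := by simp

lemma FixGE.one (N : ℕ) : FixGE N 1 := fun _ _ => rfl

lemma FixGE.mul {N : ℕ} {u v : Equiv.Perm ℕ} (hu : FixGE N u) (hv : FixGE N v) :
    FixGE N (u * v) := by
  intro k hk
  simp [Equiv.Perm.mul_apply, hv k hk, hu k hk]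

lemma FixGE.s {N i : ℕ} (h : i + 1 < N) : FixGE N (s i) := by
  intro k hk
  rw [s_apply]
  split_ifs <;> omega

/-- Number of inversions of `v` among pairs below `N`. -/
def invN (N : ℕ) (v : Equiv.Perm ℕ) : ℕ :=
  (((Finset.range N) ×ˢ (Finset.range N)).filter
    (fun p => p.1 < p.2 ∧ v p.2 < v p.1)).card

lemma invN_stable {N M : ℕ} {v : Equiv.Perm ℕ} (h : FixGE N v) (hNM : N ≤ M) :
    invN M v = invN N v := by
  unfold invN
  congr 1
  apply Finset.ext
  rintro ⟨a, b⟩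
  simp only [Finset.mem_filter, Finset.mem_product, Finset.mem_range]
  constructor
  · rintro ⟨⟨ha, hb⟩, hab, hv⟩
    have hbN : b < N := by
      by_contra hbN; push_neg at hbN
      have hvb : v b = b := h b hbN
      rcases lt_or_ge a N with haN | haN
      · have := h.lt haN; omega
      · have := h a haN; omega
    exact ⟨⟨by omega, hbN⟩, hab, hv⟩
  · rintro ⟨⟨ha, hb⟩, hab, hv⟩
    exact ⟨⟨by omega, by omega⟩, hab, hv⟩

lemma s_strict {i a b : ℕ} (hab : a < b) (hne : ¬(a = i ∧ b = i + 1)) :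
    s i a < s i b := by
  rw [s_apply, s_apply]; split_ifs <;> omega

lemma s_s (i a : ℕ) : s i (s i a) = a := by
  rw [s_apply, s_apply]; split_ifs <;> omega

lemma s_lt_N {i a N : ℕ} (hi : i + 1 < N) (ha : a < N) : s i a < N := by
  rw [s_apply]; split_ifs <;> omega

lemma erase_card_eq {N i : ℕ} (v : Equiv.Perm ℕ) (hi : i + 1 < N) :
    ((((Finset.range N) ×ˢ (Finset.range N)).filter
        (fun p => p.1 < p.2 ∧ (v * s i) p.2 < (v * s i) p.1)).erase (i, i + 1)).card =
    ((((Finset.range N) ×ˢ (Finset.range N)).filter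
        (fun p => p.1 < p.2 ∧ v p.2 < v p.1)).erase (i, i + 1)).card := by
  apply Finset.card_bij' (fun p _ => (s i p.1, s i p.2)) (fun p _ => (s i p.1, s i p.2))
  · rintro ⟨a, b⟩ ha
    rw [Finset.mem_erase] at ha ⊢
    obtain ⟨hne, hmem⟩ := ha
    simp only [Finset.mem_filter, Finset.mem_product, Finset.mem_range] at hmem ⊢; simp only [
      Equiv.Perm.mul_apply] at hmem ⊢
    obtain ⟨⟨haN, hbN⟩, hab, hv⟩ := hmem
    have hne' : ¬(a = i ∧ b = i + 1) := by
      rintro ⟨h1, h2⟩; exact hne (by rw [h1, h2])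
    refine ⟨?_, ⟨s_lt_N hi haN, s_lt_N hi hbN⟩, s_strict hab hne', hv⟩
    intro hc
    have h1 : s i a = i := congrArg Prod.fst hc
    have h2 : s i b = i + 1 := congrArg Prod.snd hc
    have ha1 : a = i + 1 := by have := s_s i a; rw [h1] at this; rw [← this, s_apply]; simp
    have hb1 : b = i := by
      have := s_s i b; rw [h2] at this; rw [← this, s_apply]; split_ifs <;> omega
    omega
  · rintro ⟨a, b⟩ ha
    rw [Finset.mem_erase] at ha ⊢
    obtain ⟨hne, hmem⟩ := ha
    simp only [Finset.mem_filter, Finset.mem_product, Finset.mem_range] at hmem ⊢; simp only [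
      Equiv.Perm.mul_apply] at hmem ⊢
    obtain ⟨⟨haN, hbN⟩, hab, hv⟩ := hmem
    have hne' : ¬(a = i ∧ b = i + 1) := by
      rintro ⟨h1, h2⟩; exact hne (by rw [h1, h2])
    refine ⟨?_, ⟨s_lt_N hi haN, s_lt_N hi hbN⟩, s_strict hab hne',
      by rw [s_s, s_s]; exact hv⟩
    intro hc
    have h1 : s i a = i := congrArg Prod.fst hc
    have h2 : s i b = i + 1 := congrArg Prod.snd hc
    have ha1 : a = i + 1 := by have := s_s i a; rw [h1] at this; rw [← this, s_apply]; simp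
    have hb1 : b = i := by
      have := s_s i b; rw [h2] at this; rw [← this, s_apply]; split_ifs <;> omega
    omega
  · rintro ⟨a, b⟩ _; simp [s_s]
  · rintro ⟨a, b⟩ _; simp [s_s]

lemma invN_mul_s_of_lt {N i : ℕ} {v : Equiv.Perm ℕ} (hi : i + 1 < N)
    (h : v i < v (i + 1)) : invN N (v * s i) = invN N v + 1 := by
  set A := (((Finset.range N) ×ˢ (Finset.range N)).filter
    (fun p => p.1 < p.2 ∧ v p.2 < v p.1)) with hA
  set B := (((Finset.range N) ×ˢ (Finset.range N)).filter
    (fun p => p.1 < p.2 ∧ (v * s i) p.2 < (v * s i) p.1)) with hB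
  have hxB : (i, i + 1) ∈ B := by
    simp only [hB, Finset.mem_filter, Finset.mem_product, Finset.mem_range]; simp only [
      Equiv.Perm.mul_apply]
    refine ⟨⟨by omega, hi⟩, by omega, ?_⟩
    have h1 : s i (i + 1) = i := by rw [s_apply]; split_ifs <;> omega
    have h2 : s i i = i + 1 := by rw [s_apply]; simp
    rw [h1, h2]; exact h
  have hxA : (i, i + 1) ∉ A := by
    simp only [hA, Finset.mem_filter, Finset.mem_product, Finset.mem_range]
    rintro ⟨-, -, hc⟩; omega
  have herase : (A.erase (i, i + 1)) = A := Finset.erase_eq_of_notMem hxA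
  have hcards := erase_card_eq v hi
  rw [← hA, ← hB, herase] at hcards
  have := Finset.card_erase_add_one hxB
  unfold invN
  rw [← hB, ← hA]
  omega

lemma invN_mul_s_of_gt {N i : ℕ} {v : Equiv.Perm ℕ} (hi : i + 1 < N)
    (h : v (i + 1) < v i) : invN N (v * s i) + 1 = invN N v := by
  set A := (((Finset.range N) ×ˢ (Finset.range N)).filter
    (fun p => p.1 < p.2 ∧ v p.2 < v p.1)) with hA
  set B := (((Finset.range N) ×ˢ (Finset.range N)).filter
    (fun p => p.1 < p.2 ∧ (v * s i) p.2 < (v * s i) p.1)) with hB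
  have hxA : (i, i + 1) ∈ A := by
    simp only [hA, Finset.mem_filter, Finset.mem_product, Finset.mem_range]
    exact ⟨⟨by omega, hi⟩, by omega, h⟩
  have hxB : (i, i + 1) ∉ B := by
    simp only [hB, Finset.mem_filter, Finset.mem_product, Finset.mem_range]; simp only [
      Equiv.Perm.mul_apply]
    rintro ⟨-, -, hc⟩
    have h1 : s i (i + 1) = i := by rw [s_apply]; split_ifs <;> omega
    have h2 : s i i = i + 1 := by rw [s_apply]; simp
    rw [h1, h2] at hc; omega
  have herase : (B.erase (i, i + 1)) = B := Finset.erase_eq_of_notMem hxB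
  have hcards := erase_card_eq v hi
  rw [← hA, ← hB, herase] at hcards
  have := Finset.card_erase_add_one hxA
  unfold invN
  rw [← hB, ← hA]
  omega

lemma invN_one (N : ℕ) : invN N 1 = 0 := by
  unfold invN
  rw [Finset.card_eq_zero, Finset.filter_eq_empty_iff]
  rintro ⟨a, b⟩ _
  simp only [Equiv.Perm.one_apply]
  omega

lemma strictMono_of_no_descent {N : ℕ} {v : Equiv.Perm ℕ} (hv : FixGE N v)
    (h : ∀ i, i + 1 < N → v i < v (i + 1)) : StrictMono (fun a => v a) := by
  apply strictMono_nat_of_lt_succ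
  intro i
  rcases lt_or_ge (i + 1) N with hi | hi
  · exact h i hi
  · rcases lt_or_ge i N with hiN | hiN
    · have h1 : v (i + 1) = i + 1 := hv (i + 1) hi
      have h2 : v i < N := hv.lt hiN
      omega
    · have h1 : v (i + 1) = i + 1 := hv (i + 1) hi
      have h2 : v i = i := hv i hiN
      omega

lemma eq_one_of_invN_zero {N : ℕ} {v : Equiv.Perm ℕ} (hv : FixGE N v)
    (h : invN N v = 0) : v = 1 := by
  have hmono : StrictMono (fun a => v a) := by
    apply strictMono_of_no_descent hv
    intro i hi
    rcases Nat.lt_trichotomy (v i) (v (i + 1)) with hlt | heq | hgt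
    · exact hlt
    · exact absurd (v.injective heq) (by omega)
    · exfalso
      have hbound : v (i + 1) < N := hv.lt (by omega)
      have : (i, i + 1) ∈ (((Finset.range N) ×ˢ (Finset.range N)).filter
          (fun p => p.1 < p.2 ∧ v p.2 < v p.1)) := by
        simp only [Finset.mem_filter, Finset.mem_product, Finset.mem_range]
        exact ⟨⟨by omega, hi⟩, by omega, hgt⟩
      have := Finset.card_pos.mpr ⟨_, this⟩
      unfold invN at h
      omega
  have hmono' : StrictMono (fun a => v⁻¹ a) := by
    intro a b hab
    rcases Nat.lt_trichotomy (v⁻¹ a) (v⁻¹ b) with hlt | heq | hgt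
    · exact hlt
    · exact absurd (v⁻¹.injective heq) (by omega)
    · exfalso
      have := hmono hgt
      simp only [Equiv.Perm.inv_def, Equiv.apply_symm_apply] at this
      omega
  ext a
  have h1 : a ≤ v a := hmono.le_apply
  have h2 : v a ≤ v⁻¹ (v a) := hmono'.le_apply
  simp only [Equiv.Perm.inv_def, Equiv.symm_apply_apply] at h2
  simp only [Equiv.Perm.one_apply]
  omega

lemma exists_descent {N : ℕ} {v : Equiv.Perm ℕ} (hv : FixGE N v)
    (h : invN N v ≠ 0) : ∃ i, i + 1 < N ∧ v (i + 1) < v i := by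
  by_contra hc
  push_neg at hc
  apply h
  have hmono : StrictMono (fun a => v a) := by
    apply strictMono_of_no_descent hv
    intro i hi
    have hle := hc i hi
    have hne : v i ≠ v (i + 1) := fun he => by have := v.injective he; omega
    omega
  unfold invN
  rw [Finset.card_eq_zero, Finset.filter_eq_empty_iff]
  rintro ⟨a, b⟩ _
  rintro ⟨hab, hinv⟩
  dsimp only at hab hinv
  have h1 : v a < v b := hmono hab
  omega

lemma exists_word : ∀ (k N : ℕ) (v : Equiv.Perm ℕ), FixGE N v → invN N v = k →
    ∃ l : List ℕ, (∀ x ∈ l, x + 1 < N) ∧ l.length = k ∧ wordProd l = v := by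
  intro k
  induction k with
  | zero =>
    intro N v hv h
    refine ⟨[], by simp, rfl, ?_⟩
    rw [wordProd_nil, eq_one_of_invN_zero hv h]
  | succ k ih =>
    intro N v hv h
    obtain ⟨i, hi, hdesc⟩ := exists_descent hv (by omega)
    have hfix : FixGE N (v * s i) := hv.mul (FixGE.s hi)
    have hinv : invN N (v * s i) = k := by
      have := invN_mul_s_of_gt hi hdesc
      omega
    obtain ⟨l, hlet, hlen, hprod⟩ := ih N (v * s i) hfix hinv
    refine ⟨l ++ [i], ?_, by simp [hlen], ?_⟩
    · intro x hx
      rcases List.mem_append.mp hx with h1 | h1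
      · exact hlet x h1
      · simp at h1; omega
    · rw [wordProd_concat, hprod, mul_assoc, s_mul_s, mul_one]

lemma le_foldr_max (l : List ℕ) : ∀ x ∈ l, x ≤ l.foldr max 0 := by
  induction l with
  | nil => simp
  | cons a l ih =>
    intro x hx
    rcases List.mem_cons.mp hx with h | h
    · subst h; simp [List.foldr_cons]
    · have := ih x h
      simp [List.foldr_cons]
      omega

lemma invN_wordProd_le {N : ℕ} (l : List ℕ) (hl : ∀ x ∈ l, x + 1 < N) :
    FixGE N (wordProd l) ∧ invN N (wordProd l) ≤ l.length := by
  induction l using List.reverseRecOn with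
  | nil => exact ⟨by rw [wordProd_nil]; exact FixGE.one N, by rw [wordProd_nil, invN_one]; simp⟩
  | append_singleton l i ih =>
    have hl' : ∀ x ∈ l, x + 1 < N := fun x hx => hl x (List.mem_append.mpr (Or.inl hx))
    have hi : i + 1 < N := hl i (List.mem_append.mpr (Or.inr (by simp)))
    obtain ⟨hfix, hle⟩ := ih hl'
    rw [wordProd_concat]
    constructor
    · exact hfix.mul (FixGE.s hi)
    · set v := wordProd l
      rcases Nat.lt_trichotomy (v i) (v (i + 1)) with hlt | heq | hgt
      · have := invN_mul_s_of_lt hi hlt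
        simp only [List.length_append, List.length_singleton]
        omega
      · exact absurd (v.injective heq) (by omega)
      · have := invN_mul_s_of_gt hi hgt
        simp only [List.length_append, List.length_singleton]
        omega

lemma len_eq_invN {N : ℕ} {w : Equiv.Perm ℕ} (h : FixGE N w) : len w = invN N w := by
  obtain ⟨l, hlet, hlen, hprod⟩ := exists_word (invN N w) N w h rfl
  apply le_antisymm
  · exact Nat.sInf_le ⟨l, hlen, hprod⟩
  · unfold len
    apply le_csInf
    · exact ⟨invN N w, l, hlen, hprod⟩
    rintro M ⟨l', hl', hprod'⟩
    set N' := max N ((l'.foldr max 0) + 2) with hN'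
    have hlet' : ∀ x ∈ l', x + 1 < N' := by
      intro x hx
      have := le_foldr_max l' x hx
      have : x + 2 ≤ (l'.foldr max 0) + 2 := by omega
      omega
    have h1 : invN N' w = invN N w := invN_stable h (le_max_left _ _)
    have h2 := (invN_wordProd_le l' hlet').2
    rw [hprod'] at h2
    omega

lemma wordProd_reverse (l : List ℕ) : wordProd l.reverse = (wordProd l)⁻¹ := by
  induction l with
  | nil => simp [wordProd_nil]
  | cons i l ih =>
    rw [List.reverse_cons, wordProd_concat, ih, wordProd_cons, mul_inv_rev]
    rw [show (s i)⁻¹ = s i from by unfold s; exact Equiv.swap_inv i (i+1)]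

lemma len_inv (w : Equiv.Perm ℕ) : len w⁻¹ = len w := by
  unfold len
  congr 1
  ext M
  constructor
  · rintro ⟨l, hl, hp⟩
    exact ⟨l.reverse, by simp [hl], by rw [wordProd_reverse, hp, inv_inv]⟩
  · rintro ⟨l, hl, hp⟩
    exact ⟨l.reverse, by simp [hl], by rw [wordProd_reverse, hp]⟩

lemma w0_apply (n a : ℕ) : w0 n a = if a < n then n - 1 - a else a := rfl

lemma w0_fix (n : ℕ) : FixGE n (w0 n) := by
  intro k hk
  rw [w0_apply, if_neg (by omega)]

lemma w0_inv (n : ℕ) : (w0 n)⁻¹ = w0 n := by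
  apply inv_eq_of_mul_eq_one_right
  ext a
  simp only [Equiv.Perm.mul_apply, Equiv.Perm.one_apply, w0_apply]
  split_ifs <;> omega

lemma invN_w0_mul {n : ℕ} (x : Equiv.Perm ℕ) (hx : FixGE n x) :
    invN n (w0 n * x) + invN n x = invN n (w0 n) := by
  classical
  set P := ((Finset.range n) ×ˢ (Finset.range n)).filter (fun p => p.1 < p.2) with hP
  have claim1 : invN n (w0 n) = P.card := by
    unfold invN
    congr 1
    apply Finset.filter_congr
    rintro ⟨a, b⟩ hab
    simp only [Finset.mem_product, Finset.mem_range] at hab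
    simp only [w0_apply]
    constructor
    · rintro ⟨h1, -⟩; exact h1
    · intro h1
      refine ⟨h1, ?_⟩
      rw [if_pos hab.1, if_pos hab.2]
      omega
  have claim2 : invN n x = (P.filter (fun p => x p.2 < x p.1)).card := by
    unfold invN
    rw [hP, Finset.filter_filter]
  have claim3 : invN n (w0 n * x) = (P.filter (fun p => ¬ x p.2 < x p.1)).card := by
    unfold invN
    rw [hP, Finset.filter_filter]
    congr 1
    apply Finset.filter_congr
    rintro ⟨a, b⟩ hab
    simp only [Finset.mem_product, Finset.mem_range] at hab
    simp only [Equiv.Perm.mul_apply, w0_apply]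
    have hxa : x a < n := hx.lt hab.1
    have hxb : x b < n := hx.lt hab.2
    rw [if_pos hxa, if_pos hxb]
    constructor
    · rintro ⟨h1, h2⟩
      refine ⟨h1, ?_⟩
      omega
    · rintro ⟨h1, h2⟩
      have hne : x a ≠ x b := fun he => by have := x.injective he; omega
      refine ⟨h1, by omega⟩
  rw [claim1, claim2, claim3, Nat.add_comm]
  exact Finset.card_filter_add_card_filter_not _

lemma letters_lt {n : ℕ} : ∀ (l : List ℕ) (w : Equiv.Perm ℕ), FixGE n w → wordProd l = w →
    l.length = len w → ∀ x ∈ l, x + 1 < n := by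
  intro l
  induction l using List.reverseRecOn with
  | nil => simp
  | append_singleton l i ih =>
    intro w hw hprod hlen
    have hlenw : len w = invN n w := len_eq_invN hw
    simp only [List.length_append, List.length_singleton] at hlen
    set N := max n (max (i + 2) ((l.foldr max 0) + 2)) with hN
    have hnN : n ≤ N := le_max_left _ _
    have hiN : i + 1 < N := by
      have : i + 2 ≤ N := le_trans (le_max_left _ _) (le_max_right _ _)
      omega
    have hlet : ∀ x ∈ l, x + 1 < N := by
      intro x hx
      have h1 := le_foldr_max l x hx
      have h2 : (l.foldr max 0) + 2 ≤ N := le_trans (le_max_right _ _) (le_max_right _ _)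
      omega
    obtain ⟨hvfix, hvle⟩ := invN_wordProd_le l hlet
    have hwN : invN N w = invN n w := invN_stable hw hnN
    have hwfixN : FixGE N w := hw.mono hnN
    have hv : wordProd l = w * s i := by
      rw [← hprod, wordProd_concat, mul_assoc, s_mul_s, mul_one]
    have hi_lt_n : i + 1 < n := by
      by_contra hc
      push_neg at hc
      have hasc : w i < w (i + 1) := by
        rcases lt_or_ge i n with hin | hin
        · have h1 : w (i + 1) = i + 1 := hw _ hc
          have h2 : w i < n := hw.lt hin
          omega
        · have h1 : w (i + 1) = i + 1 := hw _ (by omega)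
          have h2 : w i = i := hw _ hin
          omega
      have hstep := invN_mul_s_of_lt (v := w) hiN hasc
      rw [← hv] at hstep
      omega
    have hdesc : w (i + 1) < w i := by
      rcases Nat.lt_trichotomy (w i) (w (i + 1)) with hlt | heq | hgt
      · exfalso
        have hstep := invN_mul_s_of_lt (v := w) hiN hlt
        rw [← hv] at hstep
        omega
      · exact absurd (w.injective heq) (by omega)
      · exact hgt
    have hstepn := invN_mul_s_of_gt (v := w) (hi_lt_n) hdesc
    have hfixv : FixGE n (wordProd l) := by
      rw [hv]; exact hw.mul (FixGE.s hi_lt_n)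
    have hlenv : len (wordProd l) = invN n (wordProd l) := len_eq_invN hfixv
    have hred : l.length = len (wordProd l) := by
      rw [hlenv, hv]
      omega
    intro x hx
    rcases List.mem_append.mp hx with h1 | h1
    · exact ih (wordProd l) hfixv rfl hred x h1
    · simp only [List.mem_singleton] at h1
      omega

lemma finite_bdd (n : ℕ) : ∀ (L : ℕ), {l : List ℕ | l.length = L ∧ ∀ x ∈ l, x < n}.Finite := by
  intro L
  induction L with
  | zero =>
    apply Set.Finite.subset (Set.finite_singleton ([] : List ℕ))
    rintro l ⟨h, -⟩
    simp only [Set.mem_singleton_iff]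
    exact List.length_eq_zero_iff.mp h
  | succ L ih =>
    have hsub : {l : List ℕ | l.length = L + 1 ∧ ∀ x ∈ l, x < n} ⊆
        ⋃ i ∈ Finset.range n, (fun t => i :: t) '' {l | l.length = L ∧ ∀ x ∈ l, x < n} := by
      rintro l ⟨hlen, hmem⟩
      cases l with
      | nil => simp at hlen
      | cons a t =>
        simp only [Set.mem_iUnion]
        refine ⟨a, ?_, t, ⟨by simpa using hlen,
          fun x hx => hmem x (List.mem_cons_of_mem _ hx)⟩, rfl⟩
        simp only [Finset.mem_coe, Finset.mem_range]
        exact hmem a (by simp)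
    exact Set.Finite.subset (Set.Finite.biUnion (Finset.range n).finite_toSet
      (fun i _ => ih.image _)) hsub

/-- for any `w ∈ Sₙ`, `#Red(w) ≤ #Red(w₀)`. -/
theorem numRed_le_numRed_w0 (n : ℕ) (w : Equiv.Perm ℕ) (hw : ∀ k, n ≤ k → w k = k) :
    numRed w ≤ numRed (w0 n) := by
  have hwfix : FixGE n w := hw
  have hw0fix : FixGE n (w0 n) := w0_fix n
  set u := w⁻¹ * w0 n with hu
  have hufix : FixGE n u := (hwfix.inv).mul hw0fix
  have key : len w + len u = len (w0 n) := by
    have h2 : u⁻¹ = w0 n * w := by rw [hu, mul_inv_rev, inv_inv, w0_inv]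
    have h3 : len u = invN n (w0 n * w) := by
      rw [← len_inv u, h2]
      exact len_eq_invN (hw0fix.mul hwfix)
    have h4 := invN_w0_mul w hwfix
    have h5 : len w = invN n w := len_eq_invN hwfix
    have h6 : len (w0 n) = invN n (w0 n) := len_eq_invN hw0fix
    omega
  obtain ⟨m, hmlet, hmlen, hmprod⟩ := exists_word (invN n u) n u hufix rfl
  have hmred : len u = invN n u := len_eq_invN hufix
  have hsub : (fun l => l ++ m) '' {l | IsReducedWord w l} ⊆ {l | IsReducedWord (w0 n) l} := by
    rintro _ ⟨l, ⟨hp, hl⟩, rfl⟩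
    constructor
    · rw [wordProd_append, hp, hmprod, hu, mul_inv_cancel_left]
    · simp only [List.length_append, hl, hmlen, ← hmred, key]
  have hfin : {l | IsReducedWord (w0 n) l}.Finite := by
    apply Set.Finite.subset (finite_bdd n (len (w0 n)))
    rintro l ⟨hp, hl⟩
    exact ⟨hl, fun x hx => by
      have := letters_lt l (w0 n) hw0fix hp hl x hx; omega⟩
  calc numRed w = Set.ncard ((fun l => l ++ m) '' {l | IsReducedWord w l}) :=
        (Set.ncard_image_of_injective _ (fun a b h => List.append_cancel_right h)).symm
    _ ≤ numRed (w0 n) := Set.ncard_le_ncard hsub hfin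
end

section
/- If u and u' are permutations in S_n that differ in exactly three positions, then the number of 2143-pattern occurrences in u exceeds that in u' by at most 2n^3 + 3n^2 - n. -/
/-- `N_{2143,n}(u)`: the number of occurrences of the pattern `2143` in `u ∈ S_n`,
i.e. of tuples `t₁ < t₂ < t₃ < t₄` with `u t₂ < u t₁ < u t₄ < u t₃`. -/
noncomputable def N2143 (n : ℕ) (u : Equiv.Perm (Fin n)) : ℕ :=
  Nat.card {t : Fin n × Fin n × Fin n × Fin n //
    t.1 < t.2.1 ∧ t.2.1 < t.2.2.1 ∧ t.2.2.1 < t.2.2.2 ∧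
    u t.2.1 < u t.1 ∧ u t.1 < u t.2.2.2 ∧ u t.2.2.2 < u t.2.2.1}

open Finset

/-- if `u, u' ∈ S_n` differ in exactly three positions, then
`N_{2143,n}(u) - N_{2143,n}(u') ≤ 2n³ + 3n² - n`. -/
theorem N2143_diff_le (n : ℕ) (u u' : Equiv.Perm (Fin n))
    (h : {i : Fin n | u i ≠ u' i}.ncard = 3) :
    (N2143 n u : ℤ) - (N2143 n u' : ℤ) ≤ 2 * (n : ℤ) ^ 3 + 3 * (n : ℤ) ^ 2 - n := by
  classical
  set s : Finset (Fin n) := Finset.univ.filter (fun i => u i ≠ u' i) with hs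
  have hscard : s.card = 3 := by
    have h' := h
    rw [Set.ncard_eq_toFinset_card'] at h'
    simpa [s, Set.toFinset_setOf] using h'
  set P : Equiv.Perm (Fin n) → (Fin n × Fin n × Fin n × Fin n) → Prop := fun w t =>
    t.1 < t.2.1 ∧ t.2.1 < t.2.2.1 ∧ t.2.2.1 < t.2.2.2 ∧
    w t.2.1 < w t.1 ∧ w t.1 < w t.2.2.2 ∧ w t.2.2.2 < w t.2.2.1 with hP
  have hN : ∀ w, N2143 n w = (Finset.univ.filter (P w)).card := by
    intro w
    rw [N2143, Nat.card_eq_fintype_card, Fintype.card_subtype]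
  -- increasing triples
  set T : Finset (Fin n × Fin n × Fin n) :=
    Finset.univ.filter (fun r => r.1 < r.2.1 ∧ r.2.1 < r.2.2) with hT
  have hTcard : T.card ≤ n.choose 3 := by
    have hle : T.card ≤ ((Finset.univ : Finset (Fin n)).powersetCard 3).card := by
      apply Finset.card_le_card_of_injOn (fun r => ({r.1, r.2.1, r.2.2} : Finset (Fin n)))
      · intro r hr
        simp only [hT, mem_coe, mem_filter, mem_univ, true_and] at hr
        obtain ⟨h1, h2⟩ := hr
        rw [Finset.mem_coe, Finset.mem_powersetCard]
        refine ⟨fun x _ => mem_univ x, ?_⟩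
        rw [Finset.card_eq_three]
        exact ⟨r.1, r.2.1, r.2.2, ne_of_lt h1, ne_of_lt (h1.trans h2), ne_of_lt h2, rfl⟩
      · intro r hr r' hr' heq
        simp only at heq
        simp only [hT, mem_coe, mem_filter, mem_univ, true_and] at hr hr'
        obtain ⟨hab, hbc⟩ := hr
        obtain ⟨hab', hbc'⟩ := hr'
        have h1 : r.1 ∈ ({r'.1, r'.2.1, r'.2.2} : Finset (Fin n)) := by
          rw [← heq]; simp
        have h2 : r.2.1 ∈ ({r'.1, r'.2.1, r'.2.2} : Finset (Fin n)) := by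
          rw [← heq]; simp
        have h3 : r.2.2 ∈ ({r'.1, r'.2.1, r'.2.2} : Finset (Fin n)) := by
          rw [← heq]; simp
        simp only [mem_insert, mem_singleton] at h1 h2 h3
        rw [Prod.ext_iff, Prod.ext_iff]
        simp only [Fin.ext_iff, Fin.lt_def] at hab hbc hab' hbc' h1 h2 h3 ⊢
        omega
    calc T.card ≤ _ := hle
      _ = n.choose 3 := by rw [Finset.card_powersetCard, Finset.card_univ, Fintype.card_fin]
  -- the bad sets
  set Incr : (Fin n × Fin n × Fin n × Fin n) → Prop := fun t =>
    t.1 < t.2.1 ∧ t.2.1 < t.2.2.1 ∧ t.2.2.1 < t.2.2.2 with hIncr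
  set B1 := Finset.univ.filter (fun t => Incr t ∧ t.1 ∈ s) with hB1
  set B2 := Finset.univ.filter (fun t => Incr t ∧ t.2.1 ∈ s) with hB2
  set B3 := Finset.univ.filter (fun t => Incr t ∧ t.2.2.1 ∈ s) with hB3
  set B4 := Finset.univ.filter (fun t => Incr t ∧ t.2.2.2 ∈ s) with hB4
  -- main subset relation
  have hsub : Finset.univ.filter (P u) ⊆ ((Finset.univ.filter (P u') ∪ B1) ∪ B2) ∪ (B3 ∪ B4) := by
    intro t ht
    simp only [mem_filter, mem_univ, true_and, hP] at ht
    by_cases hc1 : t.1 ∈ s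
    · refine mem_union_left _ (mem_union_left _ (mem_union_right _ ?_))
      simp only [hB1, mem_filter, mem_univ, true_and, hIncr]
      exact ⟨⟨ht.1, ht.2.1, ht.2.2.1⟩, hc1⟩
    by_cases hc2 : t.2.1 ∈ s
    · refine mem_union_left _ (mem_union_right _ ?_)
      simp only [hB2, mem_filter, mem_univ, true_and, hIncr]
      exact ⟨⟨ht.1, ht.2.1, ht.2.2.1⟩, hc2⟩
    by_cases hc3 : t.2.2.1 ∈ s
    · refine mem_union_right _ (mem_union_left _ ?_)
      simp only [hB3, mem_filter, mem_univ, true_and, hIncr]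
      exact ⟨⟨ht.1, ht.2.1, ht.2.2.1⟩, hc3⟩
    by_cases hc4 : t.2.2.2 ∈ s
    · refine mem_union_right _ (mem_union_right _ ?_)
      simp only [hB4, mem_filter, mem_univ, true_and, hIncr]
      exact ⟨⟨ht.1, ht.2.1, ht.2.2.1⟩, hc4⟩
    · refine mem_union_left _ (mem_union_left _ (mem_union_left _ ?_))
      simp only [hs, mem_filter, mem_univ, true_and, not_not] at hc1 hc2 hc3 hc4
      simp only [mem_filter, mem_univ, true_and, hP]
      rw [← hc1, ← hc2, ← hc3, ← hc4]
      exact ht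
  -- bounding each bad set
  have hmapT : ∀ (r : Fin n × Fin n × Fin n), r.1 < r.2.1 → r.2.1 < r.2.2 → r ∈ T := by
    intro r h1 h2
    simp only [hT, mem_filter, mem_univ, true_and]
    exact ⟨h1, h2⟩
  have key : ∀ (B : Finset (Fin n × Fin n × Fin n × Fin n))
      (g : (Fin n × Fin n × Fin n × Fin n) → Fin n × (Fin n × Fin n × Fin n)),
      (∀ t ∈ B, g t ∈ s ×ˢ T) → (Set.InjOn g B) → B.card ≤ 3 * T.card := by
    intro B g hmaps hinj
    calc B.card ≤ (s ×ˢ T).card := Finset.card_le_card_of_injOn g hmaps hinj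
      _ = 3 * T.card := by rw [Finset.card_product, hscard]
  have hcB1 : B1.card ≤ 3 * T.card := by
    apply key B1 (fun t => (t.1, (t.2.1, t.2.2.1, t.2.2.2)))
    · intro t ht
      simp only [hB1, mem_filter, mem_univ, true_and, hIncr] at ht
      exact Finset.mk_mem_product ht.2 (hmapT _ ht.1.2.1 ht.1.2.2)
    · intro t _ t' _ heq
      simp only [Prod.mk.injEq] at heq
      obtain ⟨e1, e2, e3, e4⟩ := heq
      rw [Prod.ext_iff, Prod.ext_iff, Prod.ext_iff]
      exact ⟨e1, e2, e3, e4⟩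
  have hcB2 : B2.card ≤ 3 * T.card := by
    apply key B2 (fun t => (t.2.1, (t.1, t.2.2.1, t.2.2.2)))
    · intro t ht
      simp only [hB2, mem_filter, mem_univ, true_and, hIncr] at ht
      exact Finset.mk_mem_product ht.2 (hmapT _ (ht.1.1.trans ht.1.2.1) ht.1.2.2)
    · intro t _ t' _ heq
      simp only [Prod.mk.injEq] at heq
      obtain ⟨e2, e1, e3, e4⟩ := heq
      rw [Prod.ext_iff, Prod.ext_iff, Prod.ext_iff]
      exact ⟨e1, e2, e3, e4⟩
  have hcB3 : B3.card ≤ 3 * T.card := by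
    apply key B3 (fun t => (t.2.2.1, (t.1, t.2.1, t.2.2.2)))
    · intro t ht
      simp only [hB3, mem_filter, mem_univ, true_and, hIncr] at ht
      exact Finset.mk_mem_product ht.2 (hmapT _ ht.1.1 (ht.1.2.1.trans ht.1.2.2))
    · intro t _ t' _ heq
      simp only [Prod.mk.injEq] at heq
      obtain ⟨e3, e1, e2, e4⟩ := heq
      rw [Prod.ext_iff, Prod.ext_iff, Prod.ext_iff]
      exact ⟨e1, e2, e3, e4⟩
  have hcB4 : B4.card ≤ 3 * T.card := by
    apply key B4 (fun t => (t.2.2.2, (t.1, t.2.1, t.2.2.1)))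
    · intro t ht
      simp only [hB4, mem_filter, mem_univ, true_and, hIncr] at ht
      exact Finset.mk_mem_product ht.2 (hmapT _ ht.1.1 ht.1.2.1)
    · intro t _ t' _ heq
      simp only [Prod.mk.injEq] at heq
      obtain ⟨e4, e1, e2, e3⟩ := heq
      rw [Prod.ext_iff, Prod.ext_iff, Prod.ext_iff]
      exact ⟨e1, e2, e3, e4⟩
  -- put it together in ℕ
  have hmain : N2143 n u ≤ N2143 n u' + 12 * (n.choose 3) := by
    rw [hN u, hN u']
    calc (Finset.univ.filter (P u)).card
        ≤ (((Finset.univ.filter (P u') ∪ B1) ∪ B2) ∪ (B3 ∪ B4)).card :=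
          Finset.card_le_card hsub
      _ ≤ (Finset.univ.filter (P u')).card + B1.card + B2.card + (B3.card + B4.card) := by
          calc (((Finset.univ.filter (P u') ∪ B1) ∪ B2) ∪ (B3 ∪ B4)).card
              ≤ ((Finset.univ.filter (P u') ∪ B1) ∪ B2).card + (B3 ∪ B4).card :=
                Finset.card_union_le _ _
            _ ≤ ((Finset.univ.filter (P u') ∪ B1).card + B2.card) + (B3.card + B4.card) := by
                gcongr <;> exact Finset.card_union_le _ _
            _ ≤ ((Finset.univ.filter (P u')).card + B1.card + B2.card) + (B3.card + B4.card) := by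
                gcongr; exact Finset.card_union_le _ _
      _ ≤ (Finset.univ.filter (P u')).card + 3 * T.card + 3 * T.card
            + (3 * T.card + 3 * T.card) := by gcongr
      _ = (Finset.univ.filter (P u')).card + 12 * T.card := by ring
      _ ≤ (Finset.univ.filter (P u')).card + 12 * (n.choose 3) := by gcongr
  -- arithmetic
  have hdesc : 6 * n.choose 3 ≤ n ^ 3 := by
    have h1 : n.descFactorial 3 = 6 * n.choose 3 := by
      rw [Nat.descFactorial_eq_factorial_mul_choose]
      norm_num [Nat.factorial]
    have h2 := Nat.descFactorial_le_pow n 3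
    omega
  have hself : (n : ℤ) ≤ (n : ℤ) ^ 2 := by
    exact_mod_cast Nat.le_self_pow two_ne_zero n
  have hmainZ : (N2143 n u : ℤ) ≤ (N2143 n u' : ℤ) + 12 * (n.choose 3 : ℤ) := by
    exact_mod_cast hmain
  have hdescZ : 12 * (n.choose 3 : ℤ) ≤ 2 * (n : ℤ) ^ 3 := by
    have : (6 * n.choose 3 : ℤ) ≤ (n : ℤ) ^ 3 := by exact_mod_cast hdesc
    linarith
  linarith
end
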